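/- Let G be a finite simple graph on n vertices and let v be a c-good vertex of G. Then the number of maximal cliques K of G such that K \ {v} is not a maximal clique of the induced subgraph G − v is at most n · 3^{(c-1)/3}. -/

import Mathlib

/-- A maximal clique of a simple graph: a clique that is not a strict subset of
another clique. -/
def IsMaximalClique {V : Type*} (G : SimpleGraph V) (s : Finset V) : Prop :=
  G.IsClique (s : Set V) ∧ ∀ t : Finset V, G.IsClique (t : Set V) → s ⊆ t → s = t

/-- A vertex `v` is `c`-good if every vertex `u` distinct from and non-adjacent to `v`
has fewer than `c` common neighbors with `v`. -/
def IsCGood {V : Type*} (G : SimpleGraph V) (c : ℕ) (v : V) : Prop :=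
  ∀ u, u ≠ v → ¬ G.Adj u v → {w | G.Adj u w ∧ G.Adj v w}.ncard < c

/-- `s` is a maximal clique of the induced subgraph `G - v` (identified with the
cliques of `G` avoiding `v` that are maximal among such). -/
def IsMaximalCliqueAvoiding {V : Type*} (G : SimpleGraph V) (v : V) (s : Finset V) : Prop :=
  v ∉ s ∧ G.IsClique (s : Set V) ∧
    ∀ t : Finset V, v ∉ t → G.IsClique (t : Set V) → s ⊆ t → s = t

section MoonMoser

variable {V : Type*} [Fintype V] [DecidableEq V]

open Classical in
/-- Maximal cliques of `G` contained in `s`, maximal among cliques in `s`. -/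
noncomputable def MC (G : SimpleGraph V) (s : Finset V) : Finset (Finset V) :=
  Finset.univ.filter fun K => K ⊆ s ∧ G.IsClique (K : Set V) ∧
    ∀ t : Finset V, t ⊆ s → G.IsClique (t : Set V) → K ⊆ t → K = t

lemma mem_MC {G : SimpleGraph V} {s K : Finset V} :
    K ∈ MC G s ↔ K ⊆ s ∧ G.IsClique (K : Set V) ∧
      ∀ t : Finset V, t ⊆ s → G.IsClique (t : Set V) → K ⊆ t → K = t := by
  simp [MC]

lemma cube_le_three_pow (k : ℕ) : k ^ 3 ≤ 3 ^ k := by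
  induction k with
  | zero => simp
  | succ n ih =>
    by_cases h : n < 3
    · interval_cases n <;> norm_num
    · push_neg at h
      have h3 : (3:ℕ) ^ (n+1) = 3 * 3 ^ n := by ring
      have h1 : 3*n^2 ≤ n^3 := by nlinarith
      have h2 : 9*n ≤ 3*n^2 := by nlinarith
      calc (n+1)^3 ≤ 3 * n^3 := by nlinarith [h1, h2]
        _ ≤ 3 * 3^n := by omega
        _ = 3^(n+1) := by ring

lemma nat_le_rpow (k : ℕ) : (k : ℝ) ≤ (3:ℝ) ^ ((k:ℝ)/3) := by
  have hx : (0:ℝ) ≤ (3:ℝ) ^ ((k:ℝ)/3) := Real.rpow_nonneg (by norm_num) _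
  refine le_of_pow_le_pow_left₀ (n := 3) (by norm_num) hx ?_
  have : ((3:ℝ) ^ ((k:ℝ)/3)) ^ (3:ℕ) = (3:ℝ) ^ (k:ℝ) := by
    rw [← Real.rpow_natCast ((3:ℝ) ^ ((k:ℝ)/3)) 3, ← Real.rpow_mul (by norm_num)]
    norm_num
  rw [this, Real.rpow_natCast]
  exact_mod_cast cube_le_three_pow k

open Classical in
noncomputable def Nb (G : SimpleGraph V) (s : Finset V) (u : V) : Finset V :=
  s.filter fun w => G.Adj u w

lemma mem_Nb {G : SimpleGraph V} {s : Finset V} {u w : V} :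
    w ∈ Nb G s u ↔ w ∈ s ∧ G.Adj u w := by simp [Nb]

lemma Nb_subset {G : SimpleGraph V} {s : Finset V} {u : V} : Nb G s u ⊆ s := by
  intro w hw; exact (mem_Nb.mp hw).1

lemma moonMoser (G : SimpleGraph V) (s : Finset V) :
    ((MC G s).card : ℝ) ≤ (3:ℝ) ^ ((s.card : ℝ)/3) := by
  induction s using Finset.strongInduction with
  | _ s ih =>
  rcases s.eq_empty_or_nonempty with rfl | hs
  · have hsub : MC G ∅ ⊆ {∅} := by
      intro K hK
      have := (mem_MC.mp hK).1
      simp_all [Finset.subset_empty]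
    have h1 : (MC G ∅).card ≤ 1 := le_trans (Finset.card_le_card hsub) (by simp)
    have : ((MC G ∅).card : ℝ) ≤ 1 := by exact_mod_cast h1
    simpa using this
  · obtain ⟨v, hvs, hmax⟩ := s.exists_max_image (fun u => (Nb G s u).card) hs
    set A : Finset V := s \ Nb G s v with hA
    -- every maximal clique in s meets A
    have cover : MC G s ⊆ A.biUnion (fun u => (MC G (Nb G s u)).image (insert u)) := by
      intro K hK
      obtain ⟨hKs, hKcl, hKmax⟩ := mem_MC.mp hK
      have hex : ∃ u ∈ K, u ∈ A := by
        by_contra hcon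
        push_neg at hcon
        have hadj : ∀ u ∈ K, G.Adj v u := by
          intro u hu
          have hus : u ∈ s := hKs hu
          have := hcon u hu
          rw [hA, Finset.mem_sdiff] at this
          push_neg at this
          exact (mem_Nb.mp (this hus)).2
        have hvK : v ∉ K := fun h => (G.irrefl (v := v)) (hadj v h)
        have hcl : G.IsClique ((insert v K : Finset V) : Set V) := by
          rw [Finset.coe_insert]
          exact hKcl.insert fun b hb _ => hadj b hb
        have := hKmax (insert v K) (Finset.insert_subset hvs hKs) hcl
          (Finset.subset_insert _ _)
        exact hvK (this ▸ Finset.mem_insert_self v K)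
      obtain ⟨u, huK, huA⟩ := hex
      have hus : u ∈ s := hKs huK
      refine Finset.mem_biUnion.mpr ⟨u, huA, Finset.mem_image.mpr ⟨K.erase u, ?_, Finset.insert_erase huK⟩⟩
      rw [mem_MC]
      refine ⟨?_, hKcl.subset (by exact_mod_cast Finset.erase_subset u K), ?_⟩
      · intro w hw
        obtain ⟨hwu, hwK⟩ := Finset.mem_erase.mp hw
        exact mem_Nb.mpr ⟨hKs hwK, hKcl huK hwK (Ne.symm hwu)⟩
      · intro t hts htcl hsub
        have hut : u ∉ t := fun h => (G.irrefl (v := u)) (mem_Nb.mp (hts h)).2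
        have hcl' : G.IsClique ((insert u t : Finset V) : Set V) := by
          rw [Finset.coe_insert]
          exact htcl.insert fun b hb _ => (mem_Nb.mp (hts hb)).2
        have hKsub : K ⊆ insert u t := by
          intro w hw
          rcases eq_or_ne w u with rfl | hne
          · exact Finset.mem_insert_self _ _
          · exact Finset.mem_insert_of_mem (hsub (Finset.mem_erase.mpr ⟨hne, hw⟩))
        have hKeq : K = insert u t :=
          hKmax _ (Finset.insert_subset hus (fun w hw => Nb_subset (hts hw))) hcl' hKsub
        apply Finset.Subset.antisymm hsub
        intro w hw
        refine Finset.mem_erase.mpr ⟨fun h => hut (h ▸ hw), ?_⟩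
        rw [hKeq]; exact Finset.mem_insert_of_mem hw
    -- counting
    have hNbA : ∀ u ∈ s, Nb G s u ⊂ s := by
      intro u hu
      exact Finset.ssubset_iff_of_subset Nb_subset |>.mpr
        ⟨u, hu, fun h => (G.irrefl (v := u)) (mem_Nb.mp h).2⟩
    have hcard1 : (MC G s).card ≤ ∑ u ∈ A, (MC G (Nb G s u)).card := by
      calc (MC G s).card ≤ (A.biUnion fun u => (MC G (Nb G s u)).image (insert u)).card :=
            Finset.card_le_card cover
        _ ≤ ∑ u ∈ A, ((MC G (Nb G s u)).image (insert u)).card := Finset.card_biUnion_le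
        _ ≤ ∑ u ∈ A, (MC G (Nb G s u)).card :=
            Finset.sum_le_sum fun u _ => Finset.card_image_le
    have hterm : ∀ u ∈ A, ((MC G (Nb G s u)).card : ℝ) ≤
        (3:ℝ) ^ (((Nb G s v).card : ℝ)/3) := by
      intro u huA
      have hus : u ∈ s := (Finset.mem_sdiff.mp huA).1
      refine le_trans (ih _ (hNbA u hus)) ?_
      apply Real.rpow_le_rpow_of_exponent_le (by norm_num)
      have := hmax u hus
      have : ((Nb G s u).card : ℝ) ≤ ((Nb G s v).card : ℝ) := by exact_mod_cast this
      linarith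
    have hsplit : A.card + (Nb G s v).card = s.card :=
      Finset.card_sdiff_add_card_eq_card Nb_subset
    calc ((MC G s).card : ℝ) ≤ ∑ u ∈ A, ((MC G (Nb G s u)).card : ℝ) := by
          exact_mod_cast hcard1
      _ ≤ ∑ _u ∈ A, (3:ℝ) ^ (((Nb G s v).card : ℝ)/3) := Finset.sum_le_sum hterm
      _ = (A.card : ℝ) * (3:ℝ) ^ (((Nb G s v).card : ℝ)/3) := by
          rw [Finset.sum_const, nsmul_eq_mul]
      _ ≤ (3:ℝ) ^ ((A.card : ℝ)/3) * (3:ℝ) ^ (((Nb G s v).card : ℝ)/3) :=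
          mul_le_mul_of_nonneg_right (nat_le_rpow _) (Real.rpow_nonneg (by norm_num) _)
      _ = (3:ℝ) ^ ((s.card : ℝ)/3) := by
          rw [← Real.rpow_add (by norm_num)]
          congr 1
          rw [← add_div]
          congr 1
          exact_mod_cast hsplit

end MoonMoser

/-- If `v` is a `c`-good vertex of a finite simple graph `G` on `n` vertices, then the
number of maximal cliques `K` of `G` such that `K \ {v}` is not a maximal clique of
`G - v` is at most `n * 3^((c-1)/3)`. -/
theorem uncounted_cliques_bound {V : Type*} [Fintype V] [DecidableEq V] (c : ℕ) (hc : 0 < c)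
    (G : SimpleGraph V) (v : V) (hv : IsCGood G c v) :
    ({K : Finset V | IsMaximalClique G K ∧
        ¬ IsMaximalCliqueAvoiding G v (K.erase v)}.ncard : ℝ) ≤
      (Fintype.card V : ℝ) * (3 : ℝ) ^ (((c : ℝ) - 1) / 3) := by
  classical
  set r : ℝ := (3 : ℝ) ^ (((c : ℝ) - 1) / 3) with hr
  have hr0 : 0 ≤ r := Real.rpow_nonneg (by norm_num) _
  -- the common neighborhood of u and v, as a finset
  set C : V → Finset V := fun u => Finset.univ.filter fun w => G.Adj u w ∧ G.Adj v w with hC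
  set B : Finset V := Finset.univ.filter fun u => u ≠ v ∧ ¬ G.Adj u v with hB
  set S : Set (Finset V) := {K : Finset V | IsMaximalClique G K ∧
        ¬ IsMaximalCliqueAvoiding G v (K.erase v)} with hS
  -- cover S
  have cover : S ⊆ ↑(B.biUnion fun u => (MC G (C u)).image (insert v)) := by
    intro K hK
    obtain ⟨⟨hKcl, hKmax⟩, hnot⟩ := hK
    -- v ∈ K
    have hvK : v ∈ K := by
      by_contra hvK
      apply hnot
      rw [Finset.erase_eq_of_notMem hvK]
      exact ⟨hvK, hKcl, fun t _ htcl hsub => hKmax t htcl hsub⟩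
    -- the maximality-avoiding fails: get a witness t
    have hK'cl : G.IsClique ((K.erase v : Finset V) : Set V) :=
      hKcl.subset (by exact_mod_cast Finset.erase_subset v K)
    have hex : ∃ t : Finset V, v ∉ t ∧ G.IsClique (t : Set V) ∧ K.erase v ⊆ t ∧ K.erase v ≠ t := by
      by_contra hcon
      push_neg at hcon
      exact hnot ⟨Finset.notMem_erase v K, hK'cl,
        fun t hvt htcl hsub => hcon t hvt htcl hsub⟩
    obtain ⟨t, hvt, htcl, hsub, hne⟩ := hex
    -- get u ∈ t \ K.erase v
    have : ∃ u ∈ t, u ∉ K.erase v := by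
      by_contra hcon
      push_neg at hcon
      exact hne (Finset.Subset.antisymm hsub hcon)
    obtain ⟨u, hut, huK'⟩ := this
    have huv : u ≠ v := fun h => hvt (h ▸ hut)
    have huK : u ∉ K := fun h => huK' (Finset.mem_erase.mpr ⟨huv, h⟩)
    -- u adjacent to everything in K.erase v
    have hadjK' : ∀ w ∈ K.erase v, G.Adj u w := by
      intro w hw
      exact htcl hut (hsub hw) (fun h => huK' (h ▸ hw))
    -- u not adjacent to v
    have hnadj : ¬ G.Adj u v := by
      intro hadj
      have hcl : G.IsClique ((insert u K : Finset V) : Set V) := by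
        rw [Finset.coe_insert]
        refine hKcl.insert fun b hb hbu => ?_
        rcases eq_or_ne b v with rfl | hbv
        · exact hadj.symm.symm
        · exact (hadjK' b (Finset.mem_erase.mpr ⟨hbv, hb⟩)).symm.symm
      have := hKmax _ hcl (Finset.subset_insert u K)
      exact huK (this ▸ Finset.mem_insert_self u K)
    have huB : u ∈ B := by
      rw [hB, Finset.mem_filter]
      exact ⟨Finset.mem_univ u, huv, hnadj⟩
    -- K.erase v ∈ MC G (C u)
    have hKmem : K.erase v ∈ MC G (C u) := by
      rw [mem_MC]
      refine ⟨?_, hK'cl, ?_⟩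
      · intro w hw
        obtain ⟨hwv, hwK⟩ := Finset.mem_erase.mp hw
        rw [hC]
        simp only [Finset.mem_filter, Finset.mem_univ, true_and]
        exact ⟨hadjK' w hw, hKcl hvK hwK (Ne.symm hwv)⟩
      · intro t' ht's ht'cl hsub'
        have hvt' : v ∉ t' := by
          intro h
          have := ht's h
          rw [hC] at this
          simp only [Finset.mem_filter, Finset.mem_univ, true_and] at this
          exact G.irrefl this.2
        have hcl' : G.IsClique ((insert v t' : Finset V) : Set V) := by
          rw [Finset.coe_insert]
          refine ht'cl.insert fun b hb _ => ?_
          have := ht's hb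
          rw [hC] at this
          simp only [Finset.mem_filter, Finset.mem_univ, true_and] at this
          exact this.2
        have hKsub : K ⊆ insert v t' := by
          intro w hw
          rcases eq_or_ne w v with rfl | hne'
          · exact Finset.mem_insert_self _ _
          · exact Finset.mem_insert_of_mem (hsub' (Finset.mem_erase.mpr ⟨hne', hw⟩))
        have hKeq : K = insert v t' := hKmax _ hcl' hKsub
        apply Finset.Subset.antisymm hsub'
        intro w hw
        refine Finset.mem_erase.mpr ⟨fun h => hvt' (h ▸ hw), ?_⟩
        rw [hKeq]; exact Finset.mem_insert_of_mem hw
    exact Finset.mem_coe.mpr (Finset.mem_biUnion.mpr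
      ⟨u, huB, Finset.mem_image.mpr ⟨K.erase v, hKmem, Finset.insert_erase hvK⟩⟩)
  -- counting
  have h1 : S.ncard ≤ (B.biUnion fun u => (MC G (C u)).image (insert v)).card := by
    rw [← Set.ncard_coe_finset]
    exact Set.ncard_le_ncard cover (Finset.finite_toSet _)
  have h2 : (B.biUnion fun u => (MC G (C u)).image (insert v)).card ≤
      ∑ u ∈ B, (MC G (C u)).card :=
    le_trans Finset.card_biUnion_le (Finset.sum_le_sum fun u _ => Finset.card_image_le)
  have hterm : ∀ u ∈ B, ((MC G (C u)).card : ℝ) ≤ r := by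
    intro u huB
    rw [hB, Finset.mem_filter] at huB
    have hcard : (C u).card < c := by
      have := hv u huB.2.1 huB.2.2
      have heq : {w | G.Adj u w ∧ G.Adj v w} = ↑(C u) := by
        ext w; simp [hC]
      rwa [heq, Set.ncard_coe_finset] at this
    refine le_trans (moonMoser G (C u)) ?_
    rw [hr]
    apply Real.rpow_le_rpow_of_exponent_le (by norm_num)
    have : ((C u).card : ℝ) ≤ (c : ℝ) - 1 := by
      have : (C u).card + 1 ≤ c := hcard
      have := (Nat.cast_le (α := ℝ)).mpr this
      push_cast at this
      linarith
    linarith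
  calc (S.ncard : ℝ) ≤ (∑ u ∈ B, (MC G (C u)).card : ℕ) := by
        exact_mod_cast le_trans h1 h2
    _ = ∑ u ∈ B, ((MC G (C u)).card : ℝ) := by push_cast; ring
    _ ≤ ∑ _u ∈ B, r := Finset.sum_le_sum hterm
    _ = (B.card : ℝ) * r := by rw [Finset.sum_const, nsmul_eq_mul]
    _ ≤ (Fintype.card V : ℝ) * r := by
        apply mul_le_mul_of_nonneg_right _ hr0
        exact_mod_cast Finset.card_le_univ B
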